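/- Let A ⊆ ω be m-rigid and let c ∈ ω with c ∉ A. For a computable set S ⊆ ω define f_S : ω → ω by f_S(2x) = x, f_S(2x+1) = x if x ∈ S, f_S(2x+1) = c if x ∉ S, and set B_S := f_S⁻¹(A). Then for all computable sets S, T ⊆ ω: if B_S ≤_1 B_T, then S ⊆* T (i.e. S \ T is finite). -/

import Mathlib

/-- `A` is m-rigid: every total computable m-autoreduction of `A`
(i.e. `k` with `∀ x, x ∈ A ↔ k x ∈ A`) is eventually the identity. -/
def MRigid (A : Set ℕ) : Prop :=
  ∀ k : ℕ → ℕ, Computable k → (∀ x, x ∈ A ↔ k x ∈ A) → {x | k x ≠ x}.Finite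

open Classical in
/-- The duplication function: `f_S (2x) = x`, `f_S (2x+1) = x` if `x ∈ S`,
and `f_S (2x+1) = c` if `x ∉ S`. -/
noncomputable def dupFun (S : Set ℕ) (c : ℕ) (z : ℕ) : ℕ :=
  if z % 2 = 0 then z / 2
  else if z / 2 ∈ S then z / 2 else c

/-- Key claim: if `A` is m-rigid and `B_S := f_S⁻¹(A)`, `B_T := f_T⁻¹(A)` with
computable `S, T`, then `B_S ≤₁ B_T` forces `S ⊆* T`. -/
theorem stmt_7 (A : Set ℕ) (hA : MRigid A) (c : ℕ) (hc : c ∉ A)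
    (S T : Set ℕ) (hS : ComputablePred (· ∈ S)) (hT : ComputablePred (· ∈ T))
    (hred : OneOneReducible (· ∈ dupFun S c ⁻¹' A) (· ∈ dupFun T c ⁻¹' A)) :
    (S \ T).Finite := by
  obtain ⟨g, gcomp, ginj, hg⟩ := hred
  obtain ⟨DT, hTd⟩ := hT
  obtain ⟨DS, hSd⟩ := hS
  -- computable version of dupFun T c
  set fT : ℕ → ℕ := fun z =>
    cond (decide (z % 2 = 0)) (z / 2) (cond (decide (z / 2 ∈ T)) (z / 2) c) with hfT
  have fT_eq : ∀ z, fT z = dupFun T c z := by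
    intro z
    simp only [hfT, dupFun]
    by_cases h1 : z % 2 = 0 <;> by_cases h2 : z / 2 ∈ T <;> simp [h1, h2]
  have fTcomp : Computable fT := by
    apply Computable.cond
    · exact Primrec.to_comp (PrimrecPred.decide (Primrec.eq.comp (Primrec.nat_mod.comp .id (.const 2)) (.const 0)))
    · exact Primrec.to_comp (Primrec.nat_div.comp .id (.const 2))
    · apply Computable.cond
      · exact hTd.comp (Primrec.to_comp (Primrec.nat_div.comp .id (.const 2)))
      · exact Primrec.to_comp (Primrec.nat_div.comp .id (.const 2))
      · exact Computable.const c
  have dup_even : ∀ n, dupFun S c (2 * n) = n := by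
    intro n; simp [dupFun, Nat.mul_div_cancel_left n (by norm_num : 0 < 2), Nat.mul_mod_right]
  have dup_odd : ∀ n, n ∈ S → dupFun S c (2 * n + 1) = n := by
    intro n hn
    have h1 : (2 * n + 1) % 2 = 1 := by omega
    have h2 : (2 * n + 1) / 2 = n := by omega
    simp [dupFun, h1, h2, hn]
  set k0 : ℕ → ℕ := fun n => fT (g (2 * n)) with hk0
  set k1 : ℕ → ℕ := fun n => cond (decide (n ∈ S)) (fT (g (2 * n + 1))) n with hk1
  have k0comp : Computable k0 :=
    fTcomp.comp (gcomp.comp (Primrec.to_comp (Primrec.nat_mul.comp (.const 2) .id)))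
  have k1comp : Computable k1 := by
    apply Computable.cond hSd
    · exact fTcomp.comp (gcomp.comp (Primrec.to_comp
        (Primrec.nat_add.comp (Primrec.nat_mul.comp (.const 2) .id) (.const 1))))
    · exact Computable.id
  have k0auto : ∀ x, x ∈ A ↔ k0 x ∈ A := by
    intro x
    have := hg (2 * x)
    simp only [Set.mem_preimage, dup_even] at this
    simpa [hk0, fT_eq] using this
  have k1auto : ∀ x, x ∈ A ↔ k1 x ∈ A := by
    intro x
    by_cases hx : x ∈ S
    · have := hg (2 * x + 1)
      simp only [Set.mem_preimage, dup_odd x hx] at this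
      simpa [hk1, hx, fT_eq] using this
    · simp [hk1, hx]
  have h0 := hA k0 k0comp k0auto
  have h1 := hA k1 k1comp k1auto
  have hsub : S \ T ⊆ {x | k0 x ≠ x} ∪ {x | k1 x ≠ x} ∪ {c} := by
    intro n ⟨hnS, hnT⟩
    by_contra hcon
    simp only [Set.mem_union, Set.mem_setOf_eq, Set.mem_singleton_iff, not_or, not_not] at hcon
    obtain ⟨⟨e0, e1⟩, hnc⟩ := hcon
    have key : ∀ z, fT z = n → z = 2 * n := by
      intro z hz
      simp only [hfT] at hz
      by_cases h1 : z % 2 = 0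
      · simp [h1] at hz; omega
      · by_cases h2 : z / 2 ∈ T
        · simp [h1, h2] at hz; exact absurd (hz ▸ h2) hnT
        · simp [h1, h2] at hz; exact absurd hz.symm hnc
    have e1' : fT (g (2 * n + 1)) = n := by
      simpa [hk1, hnS] using e1
    have := ginj ((key _ e0).trans (key _ e1').symm)
    omega
  exact ((h0.union h1).union (Set.finite_singleton c)).subset hsub
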